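/- Global incentive compatibility from first-order conditions (the core of the sufficiency part of Proposition 5 on the binding-constraint region): Under the stated first-order conditions along the signaling path and the strict single crossing condition on marginal cost, for all t, s ∈ I with s ≠ t one has V(m₁*(t), t) > V(m₁*(s), t); that is, every type strictly prefers its own equilibrium cognitive signal to that of any other type. -/

import Mathlib

open Set

/-- The binding-constraint payoff
`V(m, t) = α·(M − m) + f(m, μ(m)) − c(m, t) − h(M − m)`. -/
noncomputable def bindV (α M : ℝ) (f c : ℝ → ℝ → ℝ) (h μ : ℝ → ℝ) (m t : ℝ) : ℝ :=
  α * (M - m) + f m (μ m) - c m t - h (M - m)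

/-- Global incentive compatibility from first-order conditions (sufficiency part of
Proposition 5 on the binding-constraint region): under the first-order condition along
the signaling path and strict single crossing of the marginal cost, every type strictly
prefers its own equilibrium cognitive signal to that of any other type. -/
theorem global_IC_from_FOC
    (a b α M : ℝ) (hab : a < b)
    (f c : ℝ → ℝ → ℝ) (h : ℝ → ℝ) (m1s μ : ℝ → ℝ)
    -- m1s is continuously differentiable with positive derivative on I = [a, b]
    (hm1_cd : ContDiff ℝ 1 m1s)
    (hm1_pos : ∀ t ∈ Icc a b, 0 < deriv m1s t)
    -- μ is the (continuously differentiable) inverse of m1s on J = m1s '' I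
    (hμ_inv : ∀ t ∈ Icc a b, μ (m1s t) = t)
    (hμ_diff : ∀ m ∈ m1s '' Icc a b, DifferentiableAt ℝ μ m)
    (hμ_cont : ContinuousOn (deriv μ) (m1s '' Icc a b))
    -- smoothness of f, c, h
    (hf_cd : ContDiff ℝ 1 fun p : ℝ × ℝ => f p.1 p.2)
    (hc_cd : ContDiff ℝ 1 fun p : ℝ × ℝ => c p.1 p.2)
    (hh_diff : Differentiable ℝ h)
    -- first-order condition along the signaling path
    (hFOC : ∀ t ∈ Icc a b,
      deriv (fun u => f u (μ (m1s t))) (m1s t)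
        + deriv (fun v => f (m1s t) v) (μ (m1s t)) * deriv μ (m1s t)
        - deriv (fun u => c u t) (m1s t) - α + deriv h (M - m1s t) = 0)
    -- strict single crossing of the marginal cognitive cost
    (hscm : ∀ m : ℝ, ∀ t ∈ Icc a b, ∀ t' ∈ Icc a b, t' < t →
      deriv (fun u => c u t) m < deriv (fun u => c u t') m) :
    ∀ t ∈ Icc a b, ∀ s ∈ Icc a b, s ≠ t →
      bindV α M f c h μ (m1s s) t < bindV α M f c h μ (m1s t) t := by
  intro t ht s hs hst
  have hm1_diff : Differentiable ℝ m1s := hm1_cd.differentiable one_ne_zero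
  have hc_diff : ∀ r : ℝ, Differentiable ℝ (fun u => c u r) := fun r =>
    (hc_cd.differentiable one_ne_zero).comp (differentiable_id.prodMk (differentiable_const r))
  set φ : ℝ → ℝ := fun r => bindV α M f c h μ (m1s r) t with hφdef
  have key : ∀ r ∈ Icc a b, HasDerivAt φ
      (deriv m1s r *
        (deriv (fun u => c u r) (m1s r) - deriv (fun u => c u t) (m1s r))) r := by
    intro r hr
    set x := m1s r with hx
    set y := μ x with hy
    have hm : HasDerivAt m1s (deriv m1s r) r := (hm1_diff r).hasDerivAt
    have hμx : HasDerivAt μ (deriv μ x) x := (hμ_diff x ⟨r, hr, rfl⟩).hasDerivAt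
    have hFf : HasFDerivAt (fun p : ℝ × ℝ => f p.1 p.2)
        (fderiv ℝ (fun p : ℝ × ℝ => f p.1 p.2) (x, y)) (x, y) :=
      ((hf_cd.differentiable one_ne_zero) (x, y)).hasFDerivAt
    have hpart1 : HasDerivAt (fun u => f u y)
        (fderiv ℝ (fun p : ℝ × ℝ => f p.1 p.2) (x, y) (1, 0)) x := by
      have := hFf.comp_hasDerivAt x ((hasDerivAt_id x).prodMk (hasDerivAt_const x y))
      exact this
    have hpart2 : HasDerivAt (fun v => f x v)
        (fderiv ℝ (fun p : ℝ × ℝ => f p.1 p.2) (x, y) (0, 1)) y := by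
      have := hFf.comp_hasDerivAt y ((hasDerivAt_const y x).prodMk (hasDerivAt_id y))
      exact this
    have hγ : HasDerivAt (fun r => (m1s r, μ (m1s r)))
        (deriv m1s r, deriv μ x * deriv m1s r) r := hm.prodMk (hμx.comp r hm)
    have hfc : HasDerivAt (fun r => f (m1s r) (μ (m1s r)))
        (fderiv ℝ (fun p : ℝ × ℝ => f p.1 p.2) (x, y)
          (deriv m1s r, deriv μ x * deriv m1s r)) r := by
      have := hFf.comp_hasDerivAt r hγ; exact this
    have hlin : fderiv ℝ (fun p : ℝ × ℝ => f p.1 p.2) (x, y)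
          (deriv m1s r, deriv μ x * deriv m1s r)
        = deriv m1s r * fderiv ℝ (fun p : ℝ × ℝ => f p.1 p.2) (x, y) (1, 0)
          + (deriv μ x * deriv m1s r) *
              fderiv ℝ (fun p : ℝ × ℝ => f p.1 p.2) (x, y) (0, 1) := by
      have hv : (deriv m1s r, deriv μ x * deriv m1s r)
          = deriv m1s r • ((1 : ℝ), (0 : ℝ))
            + (deriv μ x * deriv m1s r) • ((0 : ℝ), (1 : ℝ)) := by
        simp [Prod.ext_iff]
      rw [hv, map_add, map_smul, map_smul]
      simp [smul_eq_mul]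
    have hct : HasDerivAt (fun r => c (m1s r) t)
        (deriv (fun u => c u t) x * deriv m1s r) r :=
      (((hc_diff t) x).hasDerivAt).comp r hm
    have hhp : HasDerivAt (fun r => h (M - m1s r))
        (deriv h (M - x) * (0 - deriv m1s r)) r :=
      (hh_diff (M - x)).hasDerivAt.comp r ((hasDerivAt_const r M).sub hm)
    have hα : HasDerivAt (fun r => α * (M - m1s r)) (α * (0 - deriv m1s r)) r :=
      ((hasDerivAt_const r M).sub hm).const_mul α
    have total := ((hα.add hfc).sub hct).sub hhp
    have hφeq : φ = fun r =>
        α * (M - m1s r) + f (m1s r) (μ (m1s r)) - c (m1s r) t - h (M - m1s r) := by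
      funext r; simp [hφdef, bindV]
    rw [hφeq]
    convert total using 1
    case e'_4 => rfl
    case e'_5 => rfl
    case e'_8 => rfl
    have hFOCr := hFOC r hr
    rw [← hx, ← hy] at hFOCr
    rw [hpart1.deriv] at hFOCr
    rw [hpart2.deriv] at hFOCr
    rw [hlin]
    linear_combination (- deriv m1s r) * hFOCr
  have hcont : ∀ (u v : ℝ), Icc u v ⊆ Icc a b → ContinuousOn φ (Icc u v) :=
    fun u v hsub r hr => ((key r (hsub hr)).continuousAt).continuousWithinAt
  rcases hst.lt_or_gt with h1 | h1
  · -- s < t : φ strictly increasing on [a, t]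
    have hmono : StrictMonoOn φ (Icc a t) := by
      apply strictMonoOn_of_deriv_pos (convex_Icc a t)
        (hcont a t (Icc_subset_Icc le_rfl ht.2))
      intro r hr
      rw [interior_Icc] at hr
      have hrI : r ∈ Icc a b := ⟨hr.1.le, hr.2.le.trans ht.2⟩
      rw [(key r hrI).deriv]
      exact mul_pos (hm1_pos r hrI)
        (sub_pos.mpr (hscm (m1s r) t ht r hrI hr.2))
    exact hmono ⟨hs.1, h1.le⟩ ⟨ht.1, le_rfl⟩ h1
  · -- t < s : φ strictly decreasing on [t, b]
    have hanti : StrictAntiOn φ (Icc t b) := by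
      apply strictAntiOn_of_deriv_neg (convex_Icc t b)
        (hcont t b (Icc_subset_Icc ht.1 le_rfl))
      intro r hr
      rw [interior_Icc] at hr
      have hrI : r ∈ Icc a b := ⟨ht.1.trans hr.1.le, hr.2.le⟩
      rw [(key r hrI).deriv]
      have := hscm (m1s r) r hrI t ht hr.1
      nlinarith [hm1_pos r hrI]
    exact hanti ⟨le_rfl, ht.2⟩ ⟨h1.le, hs.2⟩ h1
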